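/- arXiv:0710.2107 — 4 statements merged into one kernel-verified Lean document; each statement's English description precedes it below -/
import Mathlib

section
/- Let G act on a simplicial tree T without inversions, and let T' be obtained from T by collapsing the orbit of a collapsible edge e. Then every subgroup of G that is elliptic in T' is elliptic in T. Hence T and T' have exactly the same elliptic subgroups. -/
/-- A graph in the sense of Serre: oriented edges with a fixed-point-free
reversal involution. -/
structure SGraph where
  V : Type
  E : Type
  o : E → V
  t : E → V
  bar : E → E
  bar_bar : ∀ e, bar (bar e) = e
  bar_ne : ∀ e, bar e ≠ e
  o_bar : ∀ e, o (bar e) = t e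

namespace SGraph

/-- Edge paths in a graph. -/
inductive Walk (Γ : SGraph) : Γ.V → Γ.V → Type
  | nil (v : Γ.V) : Walk Γ v v
  | cons (e : Γ.E) {w : Γ.V} (p : Walk Γ (Γ.t e) w) : Walk Γ (Γ.o e) w

/-- The list of edges traversed by a walk. -/
def Walk.edges {Γ : SGraph} : {v w : Γ.V} → Γ.Walk v w → List Γ.E
  | _, _, .nil _ => []
  | _, _, .cons e p => e :: p.edges

/-- The vertices visited by a walk. -/
def Walk.support {Γ : SGraph} : {v w : Γ.V} → Γ.Walk v w → List Γ.V
  | v, _, .nil _ => [v]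
  | _, _, .cons e p => Γ.o e :: p.support

/-- A walk is reduced if it never backtracks. -/
def Walk.Reduced {Γ : SGraph} {v w : Γ.V} (p : Γ.Walk v w) : Prop :=
  p.edges.Chain' (fun e f => f ≠ Γ.bar e)

/-- A (simplicial) tree: any two vertices are joined by a unique reduced
edge path. -/
def IsTreeG (Γ : SGraph) : Prop :=
  (∀ v w : Γ.V, Nonempty (Γ.Walk v w)) ∧
  ∀ v w : Γ.V, ∀ p q : Γ.Walk v w, p.Reduced → q.Reduced → p = q

end SGraph

/-- A `G`-tree: a simplicial tree with a `G`-action by simplicial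
automorphisms, without inversions. -/
structure GTree (G : Type) [Group G] extends SGraph where
  aV : G → V → V
  aE : G → E → E
  aV_one : ∀ v, aV 1 v = v
  aV_mul : ∀ g h v, aV (g * h) v = aV g (aV h v)
  aE_one : ∀ e, aE 1 e = e
  aE_mul : ∀ g h e, aE (g * h) e = aE g (aE h e)
  a_o : ∀ g e, o (aE g e) = aV g (o e)
  a_t : ∀ g e, t (aE g e) = aV g (t e)
  a_bar : ∀ g e, bar (aE g e) = aE g (bar e)
  no_inversions : ∀ g e, aE g e ≠ bar e
  tree : toSGraph.IsTreeG

namespace GTree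

variable {G : Type} [Group G]

/-- The (setwise pointwise) stabilizer of a vertex. -/
def stabV (T : GTree G) (v : T.V) : Set G := {g | T.aV g v = v}

/-- The stabilizer of an edge. -/
def stabE (T : GTree G) (e : T.E) : Set G := {g | T.aE g e = e}

/-- A subgroup is elliptic if it fixes a vertex. -/
def Elliptic (T : GTree G) (H : Subgroup G) : Prop :=
  ∃ v : T.V, ∀ h ∈ H, T.aV h v = v

/-- Two `G`-trees with the same elliptic subgroups. -/
def SameElliptics (T T' : GTree G) : Prop :=
  ∀ H : Subgroup G, T.Elliptic H ↔ T'.Elliptic H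

/-- The orbit of an oriented edge. -/
def ordOrbit (T : GTree G) (e : T.E) : Set T.E := {f | ∃ g, f = T.aE g e}

/-- The orbit of the geometric edge `{e, ē}`. -/
def geomOrbit (T : GTree G) (e : T.E) : Set T.E :=
  {f | ∃ g, f = T.aE g e ∨ f = T.aE g (T.bar e)}

/-- The label of an oriented edge is `=` when the edge-to-initial-vertex
inclusion `G_e → G_{o(e)}` is surjective, i.e. `G_{o(e)} ⊆ G_e`. -/
def lab (T : GTree G) (e : T.E) : Prop := T.stabV (T.o e) ⊆ T.stabE e

/-- A collapsible edge: `G_e = G_{o(e)}` and the endpoints lie in different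
`G`-orbits. -/
def CollapsibleEdge (T : GTree G) (e : T.E) : Prop :=
  T.stabV (T.o e) ⊆ T.stabE e ∧ ∀ g : G, T.aV g (T.o e) ≠ T.t e

/-- A reduced `G`-tree admits no collapse move. -/
def Reduced (T : GTree G) : Prop := ∀ e : T.E, ¬ T.CollapsibleEdge e

/-- The data of an (equivariant) collapse of the invariant edge set `S` of `T`,
producing the `G`-tree `T'`. -/
structure CollapseOnto (T T' : GTree G) (S : Set T.E) where
  inv_bar : ∀ e ∈ S, T.bar e ∈ S
  inv_act : ∀ (g : G), ∀ e ∈ S, T.aE g e ∈ S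
  φV : T.V → T'.V
  φE : T.E → Option T'.E
  equivV : ∀ g v, φV (T.aV g v) = T'.aV g (φV v)
  equivE : ∀ g e, φE (T.aE g e) = (φE e).map (T'.aE g)
  collapsed : ∀ e, φE e = none ↔ e ∈ S
  map_o : ∀ e e', φE e = some e' → T'.o e' = φV (T.o e)
  map_t : ∀ e e', φE e = some e' → T'.t e' = φV (T.t e)
  map_bar : ∀ e e', φE e = some e' → φE (T.bar e) = some (T'.bar e')
  surjV : Function.Surjective φV
  injE : ∀ e₁ e₂ e', φE e₁ = some e' → φE e₂ = some e' → e₁ = e₂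
  surjE : ∀ e', ∃ e, φE e = some e'
  identify : ∀ v w : T.V, φV v = φV w ↔
    ∃ p : T.toSGraph.Walk v w, ∀ x ∈ p.edges, x ∈ S

/-- A collapse move: equivariantly collapsing the orbit of a collapsible
edge. -/
def IsCollapse (T T' : GTree G) (e : T.E) : Prop :=
  T.CollapsibleEdge e ∧ Nonempty (CollapseOnto T T' (T.geomOrbit e))

/-- Iterated collapse of two edge orbits. -/
def IsCollapse₂ (T T' : GTree G) (e f : T.E) : Prop :=
  T.CollapsibleEdge e ∧ ∃ (T₁ : GTree G) (c : CollapseOnto T T₁ (T.geomOrbit e))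
    (f₁ : T₁.E), c.φE f = some f₁ ∧ IsCollapse T₁ T' f₁

/-- One collapse move. -/
def DefStep (T T' : GTree G) : Prop := ∃ e : T.E, IsCollapse T T' e

/-- Elementary deformations: finite sequences of collapse and expansion
moves. -/
def Deformation : GTree G → GTree G → Prop :=
  Relation.ReflTransGen (fun T T' => DefStep T T' ∨ DefStep T' T)

/-- Equivariant isomorphism of `G`-trees. -/
def EquivIso (T T' : GTree G) : Prop :=
  ∃ (ψV : T.V → T'.V) (ψE : T.E → T'.E),
    Function.Bijective ψV ∧ Function.Bijective ψE ∧
    (∀ g v, ψV (T.aV g v) = T'.aV g (ψV v)) ∧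
    (∀ g x, ψE (T.aE g x) = T'.aE g (ψE x)) ∧
    (∀ x, ψE (T.bar x) = T'.bar (ψE x)) ∧
    (∀ x, T'.o (ψE x) = ψV (T.o x)) ∧ (∀ x, T'.t (ψE x) = ψV (T.t x))

/-- Cocompactness: finitely many edge orbits. -/
def Cocompact (T : GTree G) : Prop :=
  ∃ l : List T.E, ∀ e : T.E, ∃ g : G, ∃ f ∈ l, e = T.aE g f

/-- Data of a slide move: the orbit of `e` is slid over (the orbit of) `f`. -/
structure SlideData (T T' : GTree G) (e f : T.E) where
  h_o : T.o e = T.o f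
  hstab : T.stabE e ⊆ T.stabE f
  hne : e ∉ T.geomOrbit f
  ψV : T.V → T'.V
  ψE : T.E → T'.E
  bijV : Function.Bijective ψV
  bijE : Function.Bijective ψE
  equivV : ∀ g v, ψV (T.aV g v) = T'.aV g (ψV v)
  equivE : ∀ g x, ψE (T.aE g x) = T'.aE g (ψE x)
  ψbar : ∀ x, ψE (T.bar x) = T'.bar (ψE x)
  untouched : ∀ x, x ∉ T.ordOrbit e → x ∉ T.ordOrbit (T.bar e) →
    T'.o (ψE x) = ψV (T.o x) ∧ T'.t (ψE x) = ψV (T.t x)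
  slid : ∀ g : G, T'.o (ψE (T.aE g e)) = ψV (T.aV g (T.t f)) ∧
    T'.t (ψE (T.aE g e)) = ψV (T.aV g (T.t e))

/-- A slide move of (the orbit of) some edge over the edge `f`. -/
def SlideMoveOver (T T' : GTree G) (f : T.E) : Prop :=
  ∃ e : T.E, Nonempty (SlideData T T' e f)

/-- A slide move. -/
def SlideMove (T T' : GTree G) : Prop := ∃ f : T.E, SlideMoveOver T T' f

/-- An induction move: an expansion and collapse along an ascending loop.
In the common expansion `T''`, the edges `e` and `f` form the subdivided
loop; collapsing `e` gives the tree `T` with ascending loop and vertex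
group `A`, collapsing `f` gives the tree `T'` with vertex group `B`. -/
def InductionMove (T T' : GTree G) : Prop :=
  ∃ (T'' : GTree G) (e f : T''.E), e ∉ T''.geomOrbit f ∧
    T''.o f = T''.t e ∧ (∃ s : G, T''.t f = T''.aV s (T''.o e)) ∧
    IsCollapse T'' T e ∧ IsCollapse T'' T' f

/-- An `A⁻¹`-move: an induction move followed by a collapse, removing a
strict ascending loop. `d` is the edge joining the loop vertex to the
vertex with group `C`, `ℓ` is the loop edge; `B` is proper in `C` and in
`A`, and no other edges are incident to the loop. -/
def AInvMove (T T' : GTree G) : Prop :=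
  ∃ T₁ : GTree G, InductionMove T T₁ ∧
  ∃ d : T₁.E, IsCollapse T₁ T' d ∧
    ¬ (T₁.stabV (T₁.t d) ⊆ T₁.stabE d) ∧
    ∃ ℓ : T₁.E, T₁.o ℓ = T₁.o d ∧ (∃ s : G, T₁.t ℓ = T₁.aV s (T₁.o ℓ)) ∧
      T₁.stabV (T₁.o ℓ) ⊆ T₁.stabE ℓ ∧ ¬ (T₁.stabV (T₁.t ℓ) ⊆ T₁.stabE ℓ) ∧
      ∀ x : T₁.E, T₁.o x = T₁.o d → x ∈ T₁.geomOrbit ℓ ∨ x ∈ T₁.geomOrbit d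

/-- An `A`-move is the reverse of an `A⁻¹`-move. -/
def AMove (T T' : GTree G) : Prop := AInvMove T' T

/-- A strict ascending loop in the quotient graph of groups: an edge whose
endpoints are in the same orbit, with `G_{o(ℓ)} = G_ℓ` but `G_ℓ` properly
contained in `G_{t(ℓ)}`. -/
def HasStrictAscLoop (T : GTree G) : Prop :=
  ∃ (ℓ : T.E) (s : G), T.t ℓ = T.aV s (T.o ℓ) ∧
    T.stabV (T.o ℓ) ⊆ T.stabE ℓ ∧ ¬ (T.stabV (T.t ℓ) ⊆ T.stabE ℓ)

/-- Type I Whitehead move between reduced trees. -/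
def WhiteheadI (T T' : GTree G) : Prop :=
  T.Reduced ∧ T'.Reduced ∧ ∃ (T'' : GTree G) (e e' : T''.E),
    e' ∉ T''.geomOrbit e ∧ IsCollapse T'' T e ∧ IsCollapse T'' T' e'

/-- Type II Whitehead move between reduced trees. -/
def WhiteheadII (T T' : GTree G) : Prop :=
  T.Reduced ∧ T'.Reduced ∧ ∃ (T'' : GTree G) (e e' f' : T''.E),
    e' ∉ T''.geomOrbit e ∧ f' ∉ T''.geomOrbit e ∧ f' ∉ T''.geomOrbit e' ∧
    IsCollapse T'' T e ∧ IsCollapse₂ T'' T' e' f'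

end GTree

namespace GTree

variable {G : Type} [Group G]

open Classical in
/-- Retraction sending each vertex in the orbit of `o e` to the corresponding
vertex in the orbit of `t e`. -/
noncomputable def retr (T : GTree G) (e : T.E) (x : T.V) : T.V :=
  if h : ∃ g, T.aV g (T.o e) = x then T.aV h.choose (T.t e) else x

lemma aV_inv (T : GTree G) (g : G) (v : T.V) : T.aV g⁻¹ (T.aV g v) = v := by
  rw [← T.aV_mul, inv_mul_cancel, T.aV_one]

lemma stabE_to_t (T : GTree G) {e : T.E} {g : G} (h : T.aE g e = e) :
    T.aV g (T.t e) = T.t e := by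
  conv_rhs => rw [← h, T.a_t]

lemma retr_orbit (T : GTree G) {e : T.E} (h1 : T.stabV (T.o e) ⊆ T.stabE e)
    (g : G) : T.retr e (T.aV g (T.o e)) = T.aV g (T.t e) := by
  have hex : ∃ g', T.aV g' (T.o e) = T.aV g (T.o e) := ⟨g, rfl⟩
  rw [retr, dif_pos hex]
  set g' := hex.choose with hg'
  have hspec : T.aV g' (T.o e) = T.aV g (T.o e) := hex.choose_spec
  have hst : g⁻¹ * g' ∈ T.stabV (T.o e) := by
    show T.aV (g⁻¹ * g') (T.o e) = T.o e
    rw [T.aV_mul, hspec, T.aV_inv]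
  have := T.stabE_to_t (h1 hst)
  rw [T.aV_mul] at this
  calc T.aV g' (T.t e) = T.aV g (T.aV g⁻¹ (T.aV g' (T.t e))) := by
        rw [← T.aV_mul, mul_inv_cancel, T.aV_one]
    _ = T.aV g (T.t e) := by rw [this]

lemma retr_not_orbit (T : GTree G) {e : T.E} {x : T.V}
    (h : ¬ ∃ g, T.aV g (T.o e) = x) : T.retr e x = x := dif_neg h

lemma retr_t_orbit (T : GTree G) {e : T.E}
    (h2 : ∀ g : G, T.aV g (T.o e) ≠ T.t e) (g : G) :
    T.retr e (T.aV g (T.t e)) = T.aV g (T.t e) := by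
  apply T.retr_not_orbit
  rintro ⟨g', hg'⟩
  exact h2 (g⁻¹ * g') (by rw [T.aV_mul, hg', T.aV_inv])

lemma retr_equiv (T : GTree G) {e : T.E} (h1 : T.stabV (T.o e) ⊆ T.stabE e)
    (g : G) (x : T.V) : T.retr e (T.aV g x) = T.aV g (T.retr e x) := by
  by_cases h : ∃ g', T.aV g' (T.o e) = x
  · obtain ⟨g', rfl⟩ := h
    rw [← T.aV_mul, T.retr_orbit h1, T.retr_orbit h1, T.aV_mul]
  · rw [T.retr_not_orbit h, T.retr_not_orbit]
    rintro ⟨g', hg'⟩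
    exact h ⟨g⁻¹ * g', by rw [T.aV_mul, hg', T.aV_inv]⟩

lemma t_bar (T : GTree G) (e : T.E) : T.t (T.bar e) = T.o e := by
  conv_rhs => rw [← T.bar_bar e, T.o_bar]

lemma retr_edge (T : GTree G) {e : T.E} (hcol : T.CollapsibleEdge e)
    {f : T.E} (hf : f ∈ T.geomOrbit e) :
    T.retr e (T.o f) = T.retr e (T.t f) := by
  obtain ⟨g, hg | hg⟩ := hf <;> subst hg
  · rw [T.a_o, T.a_t, T.retr_orbit hcol.1, T.retr_t_orbit hcol.2]
  · rw [T.a_o, T.a_t, T.o_bar, T.t_bar, T.retr_orbit hcol.1,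
      T.retr_t_orbit hcol.2]

lemma retr_walk (T : GTree G) {e : T.E} (hcol : T.CollapsibleEdge e) :
    ∀ {v w : T.V} (p : T.toSGraph.Walk v w),
      (∀ x ∈ p.edges, x ∈ T.geomOrbit e) → T.retr e v = T.retr e w
  | _, _, .nil _, _ => rfl
  | _, _, .cons f p, h => by
    have h1 : f ∈ T.geomOrbit e := h f List.mem_cons_self
    have h2 := T.retr_walk hcol p (fun x hx => h x (List.mem_cons_of_mem _ hx))
    rw [← h2, T.retr_edge hcol h1]

end GTree

open GTree in
/-- If `T'` is obtained from a `G`-tree `T` by collapsing the orbit of a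
collapsible edge, then every subgroup elliptic in `T'` is elliptic in `T`;
hence `T` and `T'` have exactly the same elliptic subgroups. -/
theorem collapse_move_elliptics {G : Type} [Group G] (T T' : GTree G) (e : T.E)
    (hcol : T.CollapsibleEdge e) (c : CollapseOnto T T' (T.geomOrbit e)) :
    (∀ H : Subgroup G, T'.Elliptic H → T.Elliptic H) ∧ T.SameElliptics T' := by
  have back : ∀ H : Subgroup G, T'.Elliptic H → T.Elliptic H := by
    rintro H ⟨v', hv'⟩
    obtain ⟨v, rfl⟩ := c.surjV v'
    refine ⟨T.retr e v, fun h hh => ?_⟩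
    have hfix : c.φV (T.aV h v) = c.φV v := by
      rw [c.equivV, hv' h hh]
    obtain ⟨p, hp⟩ := (c.identify _ _).mp hfix
    have := T.retr_walk hcol p hp
    rw [T.retr_equiv hcol.1] at this
    exact this
  have fwd : ∀ H : Subgroup G, T.Elliptic H → T'.Elliptic H := by
    rintro H ⟨v, hv⟩
    exact ⟨c.φV v, fun h hh => by rw [← c.equivV, hv h hh]⟩
  exact ⟨back, fun H => ⟨fwd H, back H⟩⟩
end

section
/- Let Γ be a graph of groups with one vertex with group A and one loop edge with group B and inclusion maps i₀, i₁ : B → A such that i₀ is an isomorphism (an ascending loop). If φ = i₁ ∘ i₀⁻¹ : A → A is the monodromy and B' is a subgroup with φ(A) ⊆ B' ⊆ A, then the fundamental group of Γ is isomorphic to the fundamental group of the graph of groups with one vertex with group B' and one ascending loop with monodromy the restriction φ|_{B'} : B' → B'. -/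
/-- The relations presenting the ascending HNN extension
`⟨A, t | a·a' = (aa'), t a t⁻¹ = φ(a) (a ∈ A)⟩` of a group `A` over an
endomorphism `φ`; the generators are the elements of `A` together with the
stable letter `t = Sum.inr ()`. -/
def ascHNNRels (A : Type) [Group A] (φ : A → A) : Set (FreeGroup (A ⊕ Unit)) :=
  {r | (∃ a a' : A, r = FreeGroup.of (Sum.inl a) * FreeGroup.of (Sum.inl a') *
          (FreeGroup.of (Sum.inl (a * a')))⁻¹) ∨
       (∃ a : A, r = FreeGroup.of (Sum.inr ()) * FreeGroup.of (Sum.inl a) *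
          (FreeGroup.of (Sum.inr ()))⁻¹ * (FreeGroup.of (Sum.inl (φ a)))⁻¹)}

namespace AscHNN

lemma mk_rel_eq_one {α : Type*} {rels : Set (FreeGroup α)} {r : FreeGroup α} (hr : r ∈ rels) :
    PresentedGroup.mk rels r = 1 := by
  apply (QuotientGroup.eq_one_iff r).2
  exact Subgroup.subset_normalClosure hr

variable {G : Type} [Group G] (φ : G → G)

lemma of_mul (a a' : G) :
    (PresentedGroup.of (Sum.inl a) : PresentedGroup (ascHNNRels G φ)) *
      PresentedGroup.of (Sum.inl a') = PresentedGroup.of (Sum.inl (a * a')) := by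
  have := mk_rel_eq_one (rels := ascHNNRels G φ) (Or.inl ⟨a, a', rfl⟩)
  simp only [map_mul, map_inv] at this
  rw [mul_inv_eq_one] at this
  exact this

lemma of_conj (a : G) :
    (PresentedGroup.of (Sum.inr ()) : PresentedGroup (ascHNNRels G φ)) *
      PresentedGroup.of (Sum.inl a) * (PresentedGroup.of (Sum.inr ()))⁻¹ =
      PresentedGroup.of (Sum.inl (φ a)) := by
  have := mk_rel_eq_one (rels := ascHNNRels G φ) (Or.inr ⟨a, rfl⟩)
  simp only [map_mul, map_inv] at this
  rw [mul_inv_eq_one] at this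
  exact this

end AscHNN

/-- Let a graph of groups have one vertex with group `A` and one ascending
loop: edge group `B` with inclusions `i₀, i₁ : B → A`, where `i₀` is an
isomorphism (with inverse recorded by `i₀inv`) and `i₁` is injective. Let
`φ = i₁ ∘ i₀⁻¹ : A → A` be the monodromy, and let `B'` be a subgroup with
`φ(A) ⊆ B' ⊆ A`. Then the fundamental group, i.e. the ascending HNN
extension of `A` over `φ`, is isomorphic to the ascending HNN extension of
`B'` over the restriction `φ|_{B'}`. -/
theorem induction_move_fundamental_group (A B : Type) [Group A] [Group B]
    (i₀ i₁ : B →* A) (h₀ : Function.Bijective i₀) (h₁ : Function.Injective i₁)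
    (i₀inv : A →* B) (hinv : ∀ b : B, i₀inv (i₀ b) = b)
    (B' : Subgroup A) (hB' : ∀ a : A, i₁ (i₀inv a) ∈ B') :
    Nonempty
      (PresentedGroup (ascHNNRels A (fun a => i₁ (i₀inv a))) ≃*
       PresentedGroup (ascHNNRels B' (fun b => ⟨i₁ (i₀inv b.val), hB' _⟩))) := by
  let φ : A → A := fun a => i₁ (i₀inv a)
  let φ' : ↥B' → ↥B' := fun b => ⟨i₁ (i₀inv b.val), hB' _⟩
  have hφmul : ∀ a a' : A, φ (a * a') = φ a * φ a' := by
    intro a a'; simp [φ]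
  let PA := PresentedGroup (ascHNNRels A φ)
  let PB := PresentedGroup (ascHNNRels (↥B') φ')
  let s : PB := PresentedGroup.of (Sum.inr ())
  let t : PA := PresentedGroup.of (Sum.inr ())
  let x : A → PB := fun a => PresentedGroup.of (Sum.inl ⟨φ a, hB' a⟩)
  have hx : ∀ a a' : A, x a * x a' = x (a * a') := by
    intro a a'
    have := AscHNN.of_mul φ' ⟨φ a, hB' a⟩ ⟨φ a', hB' a'⟩
    rw [this]
    congr 2
    exact Subtype.ext (hφmul a a').symm
  have hxc : ∀ a : A, s * x a * s⁻¹ = x (φ a) := by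
    intro a
    exact AscHNN.of_conj φ' ⟨φ a, hB' a⟩
  -- map PA → PB
  let F : A ⊕ Unit → PB := fun y => match y with
    | Sum.inl a => s⁻¹ * x a * s
    | Sum.inr () => s
  have hFrels : ∀ r ∈ ascHNNRels A φ, FreeGroup.lift F r = 1 := by
    rintro r (⟨a, a', rfl⟩ | ⟨a, rfl⟩)
    · simp only [map_mul, map_inv, FreeGroup.lift_apply_of]
      show (s⁻¹ * x a * s) * (s⁻¹ * x a' * s) * (s⁻¹ * x (a * a') * s)⁻¹ = 1
      rw [← hx a a']
      group
    · simp only [map_mul, map_inv, FreeGroup.lift_apply_of]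
      show s * (s⁻¹ * x a * s) * s⁻¹ * (s⁻¹ * x (φ a) * s)⁻¹ = 1
      rw [← hxc a]
      group
  let Gg : ↥B' ⊕ Unit → PA := fun y => match y with
    | Sum.inl b => PresentedGroup.of (Sum.inl b.val)
    | Sum.inr () => t
  have hGrels : ∀ r ∈ ascHNNRels (↥B') φ', FreeGroup.lift Gg r = 1 := by
    rintro r (⟨b, b', rfl⟩ | ⟨b, rfl⟩)
    · simp only [map_mul, map_inv, FreeGroup.lift_apply_of]
      show PresentedGroup.of (Sum.inl b.val) * PresentedGroup.of (Sum.inl b'.val) *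
        (PresentedGroup.of (Sum.inl (b * b').val))⁻¹ = 1
      rw [mul_inv_eq_one, AscHNN.of_mul]
      rfl
    · simp only [map_mul, map_inv, FreeGroup.lift_apply_of]
      show t * PresentedGroup.of (Sum.inl b.val) * t⁻¹ *
        (PresentedGroup.of (Sum.inl (φ' b).val))⁻¹ = 1
      rw [mul_inv_eq_one]
      exact AscHNN.of_conj φ b.val
  let f : PA →* PB := PresentedGroup.toGroup hFrels
  let g : PB →* PA := PresentedGroup.toGroup hGrels
  have hf_of : ∀ y, f (PresentedGroup.of y) = F y := fun y => PresentedGroup.toGroup.of hFrels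
  have hg_of : ∀ y, g (PresentedGroup.of y) = Gg y := fun y => PresentedGroup.toGroup.of hGrels
  have hgs : g s = t := hg_of (Sum.inr ())
  have hgf : g.comp f = MonoidHom.id PA := by
    apply PresentedGroup.ext
    rintro (a | u)
    · simp only [MonoidHom.comp_apply, MonoidHom.id_apply, hf_of]
      show g (s⁻¹ * x a * s) = PresentedGroup.of (Sum.inl a)
      rw [map_mul, map_mul, map_inv, hgs]
      have hgx : g (x a) = PresentedGroup.of (Sum.inl (φ a)) := hg_of (Sum.inl ⟨φ a, hB' a⟩)
      rw [hgx, ← AscHNN.of_conj φ a]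
      show t⁻¹ * (t * PresentedGroup.of (Sum.inl a) * t⁻¹) * t = _
      group
    · cases u
      simp only [MonoidHom.comp_apply, MonoidHom.id_apply, hf_of]
      show g s = t
      exact hgs
  have hfg : f.comp g = MonoidHom.id PB := by
    apply PresentedGroup.ext
    rintro (b | u)
    · simp only [MonoidHom.comp_apply, MonoidHom.id_apply, hg_of]
      show f (PresentedGroup.of (Sum.inl b.val)) = PresentedGroup.of (Sum.inl b)
      rw [hf_of (Sum.inl b.val)]
      show s⁻¹ * x b.val * s = PresentedGroup.of (Sum.inl b)
      have : x b.val = PresentedGroup.of (Sum.inl (φ' b)) := by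
        show PresentedGroup.of (Sum.inl (⟨φ b.val, hB' b.val⟩ : ↥B')) = _
        rfl
      rw [this, ← AscHNN.of_conj φ' b]
      show s⁻¹ * (s * PresentedGroup.of (Sum.inl b) * s⁻¹) * s = _
      group
    · cases u
      simp only [MonoidHom.comp_apply, MonoidHom.id_apply, hg_of]
      show f t = s
      exact hf_of (Sum.inr ())
  exact ⟨MonoidHom.toMulEquiv f g hgf hfg⟩
end

section
/- Let A be a group, φ : A → A an injective endomorphism, and B a subgroup with φ(A) ⊆ B ⊊ A. Suppose C is a group containing B as a proper subgroup. Then the fundamental group of the graph of groups with vertices A, C joined by an edge with group B (inclusions B ↪ A and B ↪ C), together with an ascending loop at A with monodromy φ, is isomorphic to the HNN extension of C over the inclusion B ↪ C twisted by φ|_B, as produced by an A⁻¹-move: namely to ⟨C, t | t b t⁻¹ = φ(b) for all b ∈ B⟩. -/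
/-- The relations presenting the fundamental group of the graph of groups
with two vertices `A`, `C` joined by an edge with group `B` (inclusions
`jA : B → A`, `jC : B → C`), together with an ascending loop at `A` with
monodromy `φ` and stable letter `t = Sum.inr ()`. -/
def loopEdgeRels (A C B : Type) [Group A] [Group C] [Group B]
    (jA : B → A) (jC : B → C) (φ : A → A) :
    Set (FreeGroup ((A ⊕ C) ⊕ Unit)) :=
  {r | (∃ a a' : A, r = FreeGroup.of (Sum.inl (Sum.inl a)) *
          FreeGroup.of (Sum.inl (Sum.inl a')) *
          (FreeGroup.of (Sum.inl (Sum.inl (a * a'))))⁻¹) ∨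
       (∃ c c' : C, r = FreeGroup.of (Sum.inl (Sum.inr c)) *
          FreeGroup.of (Sum.inl (Sum.inr c')) *
          (FreeGroup.of (Sum.inl (Sum.inr (c * c'))))⁻¹) ∨
       (∃ b : B, r = FreeGroup.of (Sum.inl (Sum.inl (jA b))) *
          (FreeGroup.of (Sum.inl (Sum.inr (jC b))))⁻¹) ∨
       (∃ a : A, r = FreeGroup.of (Sum.inr ()) *
          FreeGroup.of (Sum.inl (Sum.inl a)) * (FreeGroup.of (Sum.inr ()))⁻¹ *
          (FreeGroup.of (Sum.inl (Sum.inl (φ a))))⁻¹)}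

/-- The relations presenting `⟨C, t | t b t⁻¹ = φ(b) (b ∈ B)⟩`, where `B`
sits in `C` via `jC` and `ρ : B → B` is the restriction of the monodromy. -/
def targetRels (C B : Type) [Group C] [Group B] (jC : B → C) (ρ : B → B) :
    Set (FreeGroup (C ⊕ Unit)) :=
  {r | (∃ c c' : C, r = FreeGroup.of (Sum.inl c) * FreeGroup.of (Sum.inl c') *
          (FreeGroup.of (Sum.inl (c * c')))⁻¹) ∨
       (∃ b : B, r = FreeGroup.of (Sum.inr ()) * FreeGroup.of (Sum.inl (jC b)) *
          (FreeGroup.of (Sum.inr ()))⁻¹ * (FreeGroup.of (Sum.inl (jC (ρ b))))⁻¹)}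

namespace AInvMoveAux

lemma rel_one {α : Type} {rels : Set (FreeGroup α)} {r : FreeGroup α} (h : r ∈ rels) :
    PresentedGroup.mk rels r = 1 :=
  (QuotientGroup.eq_one_iff _).mpr (Subgroup.subset_normalClosure h)

lemma rel_mul {α : Type} {rels : Set (FreeGroup α)} {x y z : α}
    (h : FreeGroup.of x * FreeGroup.of y * (FreeGroup.of z)⁻¹ ∈ rels) :
    (PresentedGroup.of x : PresentedGroup rels) * PresentedGroup.of y = PresentedGroup.of z := by
  have := rel_one h
  rw [map_mul, map_inv, mul_inv_eq_one] at this
  exact this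

lemma rel_eq {α : Type} {rels : Set (FreeGroup α)} {x z : α}
    (h : FreeGroup.of x * (FreeGroup.of z)⁻¹ ∈ rels) :
    (PresentedGroup.of x : PresentedGroup rels) = PresentedGroup.of z := by
  have := rel_one h
  rw [map_mul, map_inv, mul_inv_eq_one] at this
  exact this

lemma rel_conj {α : Type} {rels : Set (FreeGroup α)} {x y z : α}
    (h : FreeGroup.of x * FreeGroup.of y * (FreeGroup.of x)⁻¹ * (FreeGroup.of z)⁻¹ ∈ rels) :
    (PresentedGroup.of x : PresentedGroup rels) * PresentedGroup.of y *
      (PresentedGroup.of x)⁻¹ = PresentedGroup.of z := by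
  have := rel_one h
  rw [map_mul, map_inv, mul_inv_eq_one, map_mul, map_inv] at this
  exact this

end AInvMoveAux

open AInvMoveAux in
/-- The `A⁻¹`-move on fundamental groups. Let `φ : A → A` be an injective
endomorphism, `B` a subgroup (embedded by `jA`) with `φ(A) ⊆ B ⊊ A`, and `C`
a group containing `B` properly (via `jC`). Let `ρ : B → B` be the restriction
`φ|_B` (so `jA (ρ b) = φ (jA b)`). Then the fundamental group of the graph of
groups with vertices `A`, `C` joined by an edge with group `B` and an
ascending loop at `A` with monodromy `φ` is isomorphic to the HNN extension
`⟨C, t | t b t⁻¹ = φ(b) (b ∈ B)⟩`. -/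
theorem aInv_move_fundamental_group (A C B : Type) [Group A] [Group C] [Group B]
    (jA : B →* A) (jC : B →* C) (hjA : Function.Injective jA)
    (hjC : Function.Injective jC) (φ : A →* A) (hφ : Function.Injective φ)
    (hφB : ∀ a : A, ∃ b : B, φ a = jA b)
    (hBA : ∃ a : A, ∀ b : B, a ≠ jA b)
    (hBC : ∃ c : C, ∀ b : B, c ≠ jC b)
    (ρ : B →* B) (hρ : ∀ b : B, jA (ρ b) = φ (jA b)) :
    Nonempty
      (PresentedGroup (loopEdgeRels A C B jA jC φ) ≃*
       PresentedGroup (targetRels C B jC ρ)) := by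
  classical
  refine ⟨?_⟩
  -- the corestriction of φ to B
  choose β hβ using hφB
  -- facts in the target group
  have Tm : ∀ c c' : C, (PresentedGroup.of (Sum.inl c) :
      PresentedGroup (targetRels C B jC ρ)) * PresentedGroup.of (Sum.inl c')
        = PresentedGroup.of (Sum.inl (c * c')) :=
    fun c c' => rel_mul (Or.inl ⟨c, c', rfl⟩)
  have Tt : ∀ b : B, (PresentedGroup.of (Sum.inr ()) :
      PresentedGroup (targetRels C B jC ρ)) * PresentedGroup.of (Sum.inl (jC b)) *
        (PresentedGroup.of (Sum.inr ()))⁻¹ = PresentedGroup.of (Sum.inl (jC (ρ b))) :=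
    fun b => rel_conj (Or.inr ⟨b, rfl⟩)
  -- facts in the loop-edge group
  have La : ∀ a a' : A, (PresentedGroup.of (Sum.inl (Sum.inl a)) :
      PresentedGroup (loopEdgeRels A C B jA jC φ)) * PresentedGroup.of (Sum.inl (Sum.inl a'))
        = PresentedGroup.of (Sum.inl (Sum.inl (a * a'))) :=
    fun a a' => rel_mul (Or.inl ⟨a, a', rfl⟩)
  have Lc : ∀ c c' : C, (PresentedGroup.of (Sum.inl (Sum.inr c)) :
      PresentedGroup (loopEdgeRels A C B jA jC φ)) * PresentedGroup.of (Sum.inl (Sum.inr c'))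
        = PresentedGroup.of (Sum.inl (Sum.inr (c * c'))) :=
    fun c c' => rel_mul (Or.inr (Or.inl ⟨c, c', rfl⟩))
  have Lb : ∀ b : B, (PresentedGroup.of (Sum.inl (Sum.inl (jA b))) :
      PresentedGroup (loopEdgeRels A C B jA jC φ))
        = PresentedGroup.of (Sum.inl (Sum.inr (jC b))) :=
    fun b => rel_eq (Or.inr (Or.inr (Or.inl ⟨b, rfl⟩)))
  have Lt : ∀ a : A, (PresentedGroup.of (Sum.inr ()) :
      PresentedGroup (loopEdgeRels A C B jA jC φ)) * PresentedGroup.of (Sum.inl (Sum.inl a)) *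
        (PresentedGroup.of (Sum.inr ()))⁻¹ = PresentedGroup.of (Sum.inl (Sum.inl (φ a))) :=
    fun a => rel_conj (Or.inr (Or.inr (Or.inr ⟨a, rfl⟩)))
  -- the forward map
  have hf : ∀ r ∈ loopEdgeRels A C B jA jC φ,
      FreeGroup.lift (fun x : (A ⊕ C) ⊕ Unit =>
        match x with
        | Sum.inl (Sum.inl a) =>
            (PresentedGroup.of (Sum.inr ()) : PresentedGroup (targetRels C B jC ρ))⁻¹ *
              PresentedGroup.of (Sum.inl (jC (β a))) * PresentedGroup.of (Sum.inr ())
        | Sum.inl (Sum.inr c) => PresentedGroup.of (Sum.inl c)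
        | Sum.inr _ => PresentedGroup.of (Sum.inr ())) r = 1 := by
    rintro r (⟨a, a', rfl⟩ | ⟨c, c', rfl⟩ | ⟨b, rfl⟩ | ⟨a, rfl⟩) <;>
      simp only [map_mul, map_inv, FreeGroup.lift_apply_of, mul_inv_eq_one]
    · have hb : β a * β a' = β (a * a') := by
        apply hjA; rw [map_mul, ← hβ, ← hβ, ← hβ, map_mul]
      have hk : (PresentedGroup.of (Sum.inl (jC (β a))) :
          PresentedGroup (targetRels C B jC ρ)) * PresentedGroup.of (Sum.inl (jC (β a')))
            = PresentedGroup.of (Sum.inl (jC (β (a * a')))) := by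
        rw [Tm, ← map_mul, hb]
      calc ((PresentedGroup.of (Sum.inr ()))⁻¹ * PresentedGroup.of (Sum.inl (jC (β a))) *
              PresentedGroup.of (Sum.inr ())) *
            ((PresentedGroup.of (Sum.inr ()))⁻¹ * PresentedGroup.of (Sum.inl (jC (β a'))) *
              PresentedGroup.of (Sum.inr ()))
          = (PresentedGroup.of (Sum.inr ()))⁻¹ *
              (PresentedGroup.of (Sum.inl (jC (β a))) *
                PresentedGroup.of (Sum.inl (jC (β a')))) *
              PresentedGroup.of (Sum.inr ()) := by group
        _ = _ := by rw [hk]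
    · exact Tm c c'
    · have hb : β (jA b) = ρ b := hjA ((hβ (jA b)).symm.trans (hρ b).symm)
      rw [hb, ← Tt b]; group
    · have hb : β (φ a) = ρ (β a) := by
        apply hjA; rw [← hβ, hρ, ← hβ]
      rw [hb, ← Tt (β a)]; group
  -- the backward map
  have hg : ∀ r ∈ targetRels C B jC ρ,
      FreeGroup.lift (fun x : C ⊕ Unit =>
        match x with
        | Sum.inl c => (PresentedGroup.of (Sum.inl (Sum.inr c)) :
            PresentedGroup (loopEdgeRels A C B jA jC φ))
        | Sum.inr _ => PresentedGroup.of (Sum.inr ())) r = 1 := by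
    rintro r (⟨c, c', rfl⟩ | ⟨b, rfl⟩) <;>
      simp only [map_mul, map_inv, FreeGroup.lift_apply_of, mul_inv_eq_one]
    · exact Lc c c'
    · rw [← Lb b, ← Lb (ρ b), hρ]
      exact Lt (jA b)
  refine (PresentedGroup.toGroup hf).toMulEquiv (PresentedGroup.toGroup hg) ?_ ?_
  · ext x
    rcases x with (a | c) | u
    · simp only [MonoidHom.comp_apply, MonoidHom.id_apply, PresentedGroup.toGroup.of,
        map_mul, map_inv]
      rw [← Lb (β a), ← hβ a, ← Lt a]
      group
    · simp [PresentedGroup.toGroup.of]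
    · simp [PresentedGroup.toGroup.of]
  · ext x
    rcases x with c | u
    · simp [PresentedGroup.toGroup.of]
    · simp [PresentedGroup.toGroup.of]
end

section
/- Let Γ be a reduced marked graph of groups obtained from Γ'' by collapsing a single geometric edge e with label =, where Γ'' lies in a deformation space D. Then every collapsible edge of Γ'' (other than e) is incident to o(e), and every such edge f with o(f) = o(e) is of one of three types: (1) t(f) ≠ t(e); (2) t(f) = t(e) and f̄ has label ≠; (3) t(f) = t(e) and f̄ has label =. Moreover, collapsing a type 2 edge of Γ'' always yields a reduced marked graph. -/
namespace GTree
variable {G : Type} [Group G]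

/-- Type 1 collapsible edge at `o(e)`: its terminal vertex is not in the
orbit of `t(e)` (which forces `ē` to have label `≠`). -/
def TypeOne (T : GTree G) (e f : T.E) : Prop :=
  T.CollapsibleEdge f ∧ T.o f = T.o e ∧ ∀ g : G, T.aV g (T.t e) ≠ T.t f

/-- Type 2: terminal vertex in the orbit of `t(e)` and `f̄` has label `≠`. -/
def TypeTwo (T : GTree G) (e f : T.E) : Prop :=
  T.CollapsibleEdge f ∧ T.o f = T.o e ∧ (∃ g : G, T.aV g (T.t e) = T.t f) ∧
    ¬ T.lab (T.bar f)

/-- Type 3: terminal vertex in the orbit of `t(e)` and `f̄` has label `=`. -/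
def TypeThree (T : GTree G) (e f : T.E) : Prop :=
  T.CollapsibleEdge f ∧ T.o f = T.o e ∧ (∃ g : G, T.aV g (T.t e) = T.t f) ∧
    T.lab (T.bar f)

end GTree

namespace GTree
variable {G : Type} [Group G]

lemma aV_comp (T : GTree G) (g h : G) (v : T.V) :
    T.aV g (T.aV h v) = T.aV (g * h) v := (T.aV_mul g h v).symm

lemma aV_inj (T : GTree G) (g : G) {v w : T.V} (h : T.aV g v = T.aV g w) :
    v = w := by
  have := congrArg (T.aV g⁻¹) h
  rwa [aV_comp, aV_comp, inv_mul_cancel, T.aV_one, T.aV_one] at this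

lemma stabE_t (T : GTree G) {e : T.E} {g : G} (h : g ∈ T.stabE e) :
    T.aV g (T.t e) = T.t e := by
  have := congrArg T.t h
  rwa [T.a_t] at this

lemma walk_lemma (T : GTree G) (e : T.E)
    (hco : ∀ g : G, T.aV g (T.o e) ≠ T.t e)
    (hlab : T.stabV (T.o e) ⊆ T.stabE e) :
    ∀ {v w : T.V} (p : T.toSGraph.Walk v w),
      (∀ x ∈ p.edges, x ∈ T.geomOrbit e) →
      ((∀ k : G, v = T.aV k (T.t e) →
          w = v ∨ ∃ g : G, T.aV g (T.t e) = v ∧ w = T.aV g (T.o e)) ∧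
       (∀ k : G, v = T.aV k (T.o e) →
          w = T.aV k (T.t e) ∨
            ∃ g : G, T.aV g (T.t e) = T.aV k (T.t e) ∧ w = T.aV g (T.o e))) := by
  intro v w p
  induction p with
  | nil v =>
    intro _
    refine ⟨fun k _ => Or.inl rfl, fun k hk => Or.inr ⟨k, rfl, hk⟩⟩
  | cons x q ih =>
    intro hp
    have hx : x ∈ T.geomOrbit e := hp x (by simp [SGraph.Walk.edges])
    have hq : ∀ y ∈ q.edges, y ∈ T.geomOrbit e := fun y hy =>
      hp y (by simp [SGraph.Walk.edges, hy])
    obtain ⟨h, hxe | hxe⟩ := hx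
    · -- x = aE h e
      have hov : T.o x = T.aV h (T.o e) := by rw [hxe, T.a_o]
      have htv : T.t x = T.aV h (T.t e) := by rw [hxe, T.a_t]
      constructor
      · intro k hk
        exfalso
        apply hco (k⁻¹ * h)
        rw [← aV_comp]
        apply T.aV_inj k
        rw [aV_comp, mul_inv_cancel, T.aV_one, ← hov, hk]
      · intro k hk
        have hst : k⁻¹ * h ∈ T.stabV (T.o e) := by
          show T.aV (k⁻¹ * h) (T.o e) = T.o e
          rw [← aV_comp]
          apply T.aV_inj k
          rw [aV_comp, mul_inv_cancel, T.aV_one, ← hov, hk]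
        have hte : T.aV h (T.t e) = T.aV k (T.t e) := by
          have := stabE_t T (hlab hst)
          rw [← aV_comp] at this
          have := congrArg (T.aV k) this
          rwa [aV_comp, aV_comp, mul_inv_cancel, one_mul] at this
        rcases (ih hq).1 h htv with h1 | ⟨g, hg1, hg2⟩
        · left; rw [h1, htv, hte]
        · right; exact ⟨g, by rw [hg1, htv, hte], hg2⟩
    · -- x = aE h (bar e)
      have hov : T.o x = T.aV h (T.t e) := by rw [hxe, T.a_o, T.o_bar]
      have htv : T.t x = T.aV h (T.o e) := by rw [hxe, T.a_t, t_bar]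
      constructor
      · intro k _
        rcases (ih hq).2 h htv with h1 | ⟨g, hg1, hg2⟩
        · left; rw [h1, hov]
        · right; exact ⟨g, by rw [hg1, hov], hg2⟩
      · intro k hk
        exfalso
        apply hco (h⁻¹ * k)
        rw [← aV_comp]
        apply T.aV_inj h
        rw [aV_comp, mul_inv_cancel, T.aV_one, ← hk, hov]

/-- Master connectivity lemma: if `v` is joined to `w` by a walk of collapsed
edges and `v` is not in the orbit of `o e`, then either `w = v` or `v` is a
translate of `t e` and `w` the corresponding translate of `o e`. -/
lemma walk_conn (T : GTree G) (e : T.E)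
    (hco : ∀ g : G, T.aV g (T.o e) ≠ T.t e)
    (hlab : T.stabV (T.o e) ⊆ T.stabE e)
    {v w : T.V} (p : T.toSGraph.Walk v w)
    (hp : ∀ x ∈ p.edges, x ∈ T.geomOrbit e)
    (hv : ∀ g : G, T.aV g (T.o e) ≠ v) :
    w = v ∨ ∃ g : G, T.aV g (T.t e) = v ∧ w = T.aV g (T.o e) := by
  cases p with
  | nil => exact Or.inl rfl
  | cons x q =>
    have hx : x ∈ T.geomOrbit e := hp x (by simp [SGraph.Walk.edges])
    obtain ⟨h, hxe | hxe⟩ := hx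
    · exact absurd (by rw [hxe, T.a_o]) (hv h)
    · exact (walk_lemma T e hco hlab (SGraph.Walk.cons x q) hp).1 h
        (by rw [hxe, T.a_o, T.o_bar])

lemma self_mem_geomOrbit (T : GTree G) (e : T.E) : e ∈ T.geomOrbit e :=
  ⟨1, Or.inl (T.aE_one e).symm⟩

end GTree

open GTree in
/-- Let `Γ = Γ''_e` be reduced, where `e` is a collapsible edge of `Γ''` with
label `=`. Then every collapsible edge of `Γ''` other than (the orbit of) `e`
is incident to (the orbit of) `o(e)`; every such edge `f` with `o(f) = o(e)`
is of type 1, 2 or 3; and collapsing a type 2 edge always yields a reduced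
tree. -/
theorem collapsible_edge_types {G : Type} [Group G] (T'' T : GTree G)
    (e : T''.E) (hlab : T''.lab e) (hce : IsCollapse T'' T e)
    (hred : T.Reduced) :
    (∀ f : T''.E, T''.CollapsibleEdge f → f ∉ T''.geomOrbit e →
      ∃ g : G, T''.aV g (T''.o e) = T''.o f ∨ T''.aV g (T''.o e) = T''.t f) ∧
    (∀ f : T''.E, T''.CollapsibleEdge f → f ∉ T''.geomOrbit e →
      T''.o f = T''.o e →
      T''.TypeOne e f ∨ T''.TypeTwo e f ∨ T''.TypeThree e f) ∧
    (∀ f : T''.E, f ∉ T''.geomOrbit e → T''.TypeTwo e f →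
      ∀ T₃ : GTree G, IsCollapse T'' T₃ f → T₃.Reduced) := by
  obtain ⟨hcoe, ⟨c⟩⟩ := hce
  have hco_e : ∀ g : G, T''.aV g (T''.o e) ≠ T''.t e := hcoe.2
  have hlab_e : T''.stabV (T''.o e) ⊆ T''.stabE e := hcoe.1
  refine ⟨?_, ?_, ?_⟩
  · -- Part 1: collapsible edges are incident to the orbit of o e
    intro f hcf hne
    by_contra hcon
    push_neg at hcon
    obtain ⟨f', hf'⟩ : ∃ f', c.φE f = some f' := by
      cases hE : c.φE f with
      | none => exact absurd ((c.collapsed f).mp hE) hne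
      | some f' => exact ⟨f', rfl⟩
    have ho' : T.o f' = c.φV (T''.o f) := c.map_o f f' hf'
    have ht' : T.t f' = c.φV (T''.t f) := c.map_t f f' hf'
    apply hred f'
    constructor
    · intro g hg
      have hg' : c.φV (T''.aV g (T''.o f)) = c.φV (T''.o f) := by
        rw [c.equivV, ← ho']; exact hg
      obtain ⟨p, hp⟩ := (c.identify _ _).mp hg'
      have hvnot : ∀ k : G, T''.aV k (T''.o e) ≠ T''.aV g (T''.o f) := by
        intro k hk
        apply (hcon (g⁻¹ * k)).1
        rw [← T''.aV_comp]
        apply T''.aV_inj g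
        rw [T''.aV_comp, mul_inv_cancel, T''.aV_one, hk]
      rcases T''.walk_conn e hco_e hlab_e p hp hvnot with h1 | ⟨a, _, h2⟩
      · -- g stabilizes o f, hence f, hence f'
        have hgf : T''.aE g f = f := hcf.1 h1.symm
        have := c.equivE g f
        rw [hgf, hf'] at this
        show T.aE g f' = f'
        simpa using this.symm
      · exact absurd h2.symm (hcon a).1
    · intro g hgt
      have hg' : c.φV (T''.aV g (T''.o f)) = c.φV (T''.t f) := by
        rw [c.equivV, ← ho', ← ht']; exact hgt
      obtain ⟨p, hp⟩ := (c.identify _ _).mp hg'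
      have hvnot : ∀ k : G, T''.aV k (T''.o e) ≠ T''.aV g (T''.o f) := by
        intro k hk
        apply (hcon (g⁻¹ * k)).1
        rw [← T''.aV_comp]
        apply T''.aV_inj g
        rw [T''.aV_comp, mul_inv_cancel, T''.aV_one, hk]
      rcases T''.walk_conn e hco_e hlab_e p hp hvnot with h1 | ⟨a, _, h2⟩
      · exact hcf.2 g h1.symm
      · exact (hcon a).2 h2.symm
  · -- Part 2: trichotomy
    intro f hcf hne hof
    by_cases h1 : ∃ g : G, T''.aV g (T''.t e) = T''.t f
    · by_cases h2 : T''.lab (T''.bar f)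
      · exact Or.inr (Or.inr ⟨hcf, hof, h1, h2⟩)
      · exact Or.inr (Or.inl ⟨hcf, hof, h1, h2⟩)
    · push_neg at h1
      exact Or.inl ⟨hcf, hof, h1⟩
  · -- Part 3: collapsing a type 2 edge yields a reduced tree
    intro f hne hT2 T₃ hcf3
    obtain ⟨hcf, hof, ⟨g₀, hg₀⟩, hnlab⟩ := hT2
    obtain ⟨-, ⟨c₃⟩⟩ := hcf3
    intro x' hx'
    obtain ⟨x, hx⟩ := c₃.surjE x'
    have hxS : x ∉ T''.geomOrbit f := by
      intro hS
      rw [(c₃.collapsed x).mpr hS] at hx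
      exact nomatch hx
    have hoff : c₃.φV (T''.o f) = c₃.φV (T''.t f) := by
      apply (c₃.identify _ _).mpr
      refine ⟨SGraph.Walk.cons f (SGraph.Walk.nil _), ?_⟩
      intro y hy
      simp only [SGraph.Walk.edges, List.mem_singleton] at hy
      rw [hy]
      exact T''.self_mem_geomOrbit f
    have hox' : T₃.o x' = c₃.φV (T''.o x) := c₃.map_o x x' hx
    have htx' : T₃.t x' = c₃.φV (T''.t x) := c₃.map_t x x' hx
    -- a helper: any g stabilizing o x in T'' stabilizes x in T''
    have pullstab : ∀ g : G, c₃.φV (T''.aV g (T''.o x)) = c₃.φV (T''.o x) →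
        T''.aE g x = x := by
      intro g hg
      have hA : T₃.aV g (T₃.o x') = T₃.o x' := by
        rw [hox', ← c₃.equivV]; exact hg
      have hB : T₃.aE g x' = x' := hx'.1 hA
      have hC := c₃.equivE g x
      rw [hx] at hC
      apply c₃.injE _ _ x' _ hx
      rw [hC]
      simp [hB]
    by_cases hcaseI : ∃ k : G, T''.aV k (T''.o f) = T''.o x
    · -- Case I : o x is in the orbit of o f : contradicts ¬ lab (bar f)
      obtain ⟨k, hk⟩ := hcaseI
      apply hnlab
      intro s hs
      have hs' : T''.aV s (T''.t f) = T''.t f := by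
        have : T''.aV s (T''.o (T''.bar f)) = T''.o (T''.bar f) := hs
        rwa [T''.o_bar] at this
      have key : c₃.φV (T''.aV (k * s * k⁻¹) (T''.o x)) = c₃.φV (T''.o x) := by
        rw [← hk, T''.aV_comp, inv_mul_cancel_right, ← T''.aV_comp k s,
          c₃.equivV, c₃.equivV, hoff, ← c₃.equivV, hs', ← hoff, ← c₃.equivV]
      have hEx : T''.aE (k * s * k⁻¹) x = x := pullstab _ key
      have hVx : T''.aV (k * s * k⁻¹) (T''.o x) = T''.o x := by
        have := congrArg T''.o hEx
        rwa [T''.a_o] at this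
      have hsof : T''.aV s (T''.o f) = T''.o f := by
        apply T''.aV_inj k
        rw [T''.aV_comp]
        have : T''.aV (k * s * k⁻¹) (T''.aV k (T''.o f)) = T''.aV k (T''.o f) := by
          rw [hk]; exact hVx
        rwa [T''.aV_comp, inv_mul_cancel_right] at this
      have hsE : s ∈ T''.stabE f := hcf.1 hsof
      show T''.aE s (T''.bar f) = T''.bar f
      rw [← T''.a_bar, show T''.aE s f = f from hsE]
    · -- Case II : o x not in the orbit of o f = o e
      have hnot_oe : ∀ k : G, T''.aV k (T''.o e) ≠ T''.o x := by
        intro k hk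
        exact hcaseI ⟨k, by rw [hof]; exact hk⟩
      by_cases hxe : x ∈ T''.geomOrbit e
      · obtain ⟨h, hx1 | hx1⟩ := hxe
        · exact hcaseI ⟨h, by rw [hof, ← T''.a_o, ← hx1]⟩
        · -- x = aE h (bar e); the two endpoints of x' are in the same orbit
          apply hx'.2 (h * g₀ * h⁻¹)
          rw [hox', htx', ← c₃.equivV]
          have hovx : T''.o x = T''.aV h (T''.t e) := by
            rw [hx1, T''.a_o, T''.o_bar]
          have htvx : T''.t x = T''.aV h (T''.o f) := by
            rw [hx1, T''.a_t, T''.t_bar, hof]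
          have h1 : T''.aV (h * g₀ * h⁻¹) (T''.o x) = T''.aV h (T''.t f) := by
            rw [hovx, T''.aV_comp, show h * g₀ * h⁻¹ * h = h * g₀ by group,
              ← T''.aV_comp, hg₀]
          rw [h1, htvx, c₃.equivV, c₃.equivV, hoff]
      · -- x survives the collapse of e as well
        obtain ⟨x₁, hx₁⟩ : ∃ x₁, c.φE x = some x₁ := by
          cases hE : c.φE x with
          | none => exact absurd ((c.collapsed x).mp hE) hxe
          | some x₁ => exact ⟨x₁, rfl⟩
        have ho₁ : T.o x₁ = c.φV (T''.o x) := c.map_o x x₁ hx₁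
        have ht₁ : T.t x₁ = c.φV (T''.t x) := c.map_t x x₁ hx₁
        apply hred x₁
        constructor
        · intro g hg
          have hg' : c.φV (T''.aV g (T''.o x)) = c.φV (T''.o x) := by
            rw [c.equivV, ← ho₁]; exact hg
          obtain ⟨p, hp⟩ := (c.identify _ _).mp hg'
          have hvnot : ∀ k : G, T''.aV k (T''.o e) ≠ T''.aV g (T''.o x) := by
            intro k hk
            apply hnot_oe (g⁻¹ * k)
            rw [← T''.aV_comp]
            apply T''.aV_inj g
            rw [T''.aV_comp, mul_inv_cancel, T''.aV_one, hk]
          rcases T''.walk_conn e hco_e hlab_e p hp hvnot with h1 | ⟨a, _, h2⟩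
          · -- g stabilizes o x in T''
            have hEx : T''.aE g x = x := by
              apply pullstab
              rw [← h1]
            have := c.equivE g x
            rw [hEx, hx₁] at this
            show T.aE g x₁ = x₁
            simpa using this.symm
          · exact absurd h2.symm (hnot_oe a)
        · intro g hgt
          have hg' : c.φV (T''.aV g (T''.o x)) = c.φV (T''.t x) := by
            rw [c.equivV, ← ho₁, ← ht₁]; exact hgt
          obtain ⟨p, hp⟩ := (c.identify _ _).mp hg'
          have hvnot : ∀ k : G, T''.aV k (T''.o e) ≠ T''.aV g (T''.o x) := by
            intro k hk
            apply hnot_oe (g⁻¹ * k)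
            rw [← T''.aV_comp]
            apply T''.aV_inj g
            rw [T''.aV_comp, mul_inv_cancel, T''.aV_one, hk]
          rcases T''.walk_conn e hco_e hlab_e p hp hvnot with h1 | ⟨a, ha1, ha2⟩
          · apply hx'.2 g
            rw [hox', htx', ← c₃.equivV, ← h1]
          · apply hx'.2 (a * g₀ * a⁻¹ * g)
            rw [hox', htx', ← c₃.equivV]
            have hstep : T''.aV (a * g₀ * a⁻¹ * g) (T''.o x) = T''.aV a (T''.t f) := by
              rw [← T''.aV_comp _ g, ← ha1, T''.aV_comp,
                show a * g₀ * a⁻¹ * a = a * g₀ by group, ← T''.aV_comp, hg₀]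
            rw [hstep, ha2, ← hof, c₃.equivV, c₃.equivV, hoff]
end
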